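/- Fix q ≥ 2 and let φ_cw : ℂ^{q+1} × ℂ^{q+1} → ℂ^{q+1} be the easy Coppersmith–Winograd bilinear map. Then for every bilinear map ψ : U × V → W between finite-dimensional ℂ-vector spaces with U ≠ 0, m(φ_cw ⊗ ψ) ≥ 2 m(ψ). -/

import Mathlib

open scoped BigOperators

/-- Evaluation of a bilinear map given by a structure-constant array. -/
noncomputable def bApp {I J K : Type*} [Fintype I] [Fintype J]
    (ψ : I → J → K → ℂ) (u : I → ℂ) (v : J → ℂ) : K → ℂ :=
  fun k => ∑ i, ∑ j, ψ i j k * u i * v j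

/-- `m(ψ)`: the minimum over nonzero `u` of the dimension of the span of
`{ψ(u, v) : v}`. -/
noncomputable def mval {I J K : Type*} [Fintype I] [Fintype J]
    (ψ : I → J → K → ℂ) : ℕ :=
  sInf {d | ∃ u : I → ℂ, u ≠ 0 ∧
    d = Module.finrank ℂ (Submodule.span ℂ (Set.range (bApp ψ u)))}

/-- The tensor product of two bilinear maps, in coordinates. -/
noncomputable def tmulBil {I J K I' J' K' : Type*}
    (φ : I → J → K → ℂ) (ψ : I' → J' → K' → ℂ) :
    I × I' → J × J' → K × K' → ℂ :=
  fun i j k => φ i.1 j.1 k.1 * ψ i.2 j.2 k.2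

/-- The easy Coppersmith–Winograd bilinear map
`φ_cw(a, b) = (Σᵢ aᵢbᵢ) e₀ + Σᵢ (a₀bᵢ + aᵢb₀) eᵢ` on `ℂ^{q+1}`,
as a structure-constant array. -/
noncomputable def cwArr (q : ℕ) : Fin (q + 1) → Fin (q + 1) → Fin (q + 1) → ℂ :=
  fun i j k =>
    if k = 0 then (if i = j ∧ i ≠ 0 then 1 else 0)
    else (if i = 0 ∧ j = k then 1 else 0) + (if i = k ∧ j = 0 then 1 else 0)

section Aux

variable {I J K : Type*} [Fintype I] [Fintype J]

lemma bApp_zero_right (ψ : I → J → K → ℂ) (w : I → ℂ) (κ : K) : bApp ψ w 0 κ = 0 := by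
  simp [bApp]

lemma bApp_zero_fun (ψ : I → J → K → ℂ) (w : I → ℂ) (κ : K) :
    bApp ψ w (fun _ => 0) κ = 0 := by simp [bApp]

lemma bApp_zero_left (ψ : I → J → K → ℂ) (v : J → ℂ) (κ : K) : bApp ψ 0 v κ = 0 := by
  simp [bApp]

noncomputable def bAppL (ψ : I → J → K → ℂ) (u : I → ℂ) : (J → ℂ) →ₗ[ℂ] (K → ℂ) where
  toFun := bApp ψ u
  map_add' v w := by
    funext k
    simp [bApp, mul_add, Finset.sum_add_distrib]
  map_smul' c v := by
    funext k
    simp only [bApp, RingHom.id_apply, Pi.smul_apply, smul_eq_mul, Finset.mul_sum]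
    refine Finset.sum_congr rfl fun i _ => Finset.sum_congr rfl fun j _ => by ring

lemma span_range_bApp (ψ : I → J → K → ℂ) (u : I → ℂ) :
    Submodule.span ℂ (Set.range (bApp ψ u)) = LinearMap.range (bAppL ψ u) := by
  have h : Set.range (bApp ψ u) = Set.range (bAppL ψ u) := rfl
  rw [h, ← LinearMap.coe_range, Submodule.span_eq]

lemma finite_span_range_bApp (ψ : I → J → K → ℂ) (u : I → ℂ) :
    Module.Finite ℂ (Submodule.span ℂ (Set.range (bApp ψ u))) := by
  rw [span_range_bApp]; infer_instance

lemma sum_pair {n : ℕ} (a b : Fin n) (f : Fin n → Fin n → ℂ) :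
    ∑ i, ∑ j, (if i = a ∧ j = b then (1:ℂ) else 0) * f i j = f a b := by
  simp [ite_and, Finset.sum_ite_eq, ite_mul]

lemma bApp_tmul {n : ℕ} (φ : Fin n → Fin n → Fin n → ℂ) (ψ : I → J → K → ℂ)
    (u : Fin n × I → ℂ) (v : Fin n × J → ℂ) (k : Fin n) (κ : K) :
    bApp (tmulBil φ ψ) u v (k, κ) =
      ∑ i, ∑ j, φ i j k * bApp ψ (fun x => u (i, x)) (fun y => v (j, y)) κ := by
  simp only [bApp, tmulBil, Fintype.sum_prod_type, Finset.mul_sum]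
  refine Finset.sum_congr rfl fun i _ => ?_
  rw [Finset.sum_comm]
  refine Finset.sum_congr rfl fun j _ => Finset.sum_congr rfl fun i' _ =>
    Finset.sum_congr rfl fun j' _ => by ring

/-- Key structural lemma: from any nonzero `u` we can extract two distinct output
blocks realizing `ψ(w, ·)` independently. -/
lemma key_lemma (q : ℕ) (hq : 2 ≤ q) (ψ : I → J → K → ℂ)
    (u : Fin (q+1) × I → ℂ) (hu : u ≠ 0) :
    ∃ (a b : Fin (q+1)) (w : I → ℂ), a ≠ b ∧ w ≠ 0 ∧
      ∀ x y : J → ℂ, ∃ v : Fin (q+1) × J → ℂ,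
        (∀ κ, bApp (tmulBil (cwArr q) ψ) u v (a, κ) = bApp ψ w x κ) ∧
        (∀ κ, bApp (tmulBil (cwArr q) ψ) u v (b, κ) = bApp ψ w y κ) := by
  classical
  have e1 : ((1 : Fin (q+1)) : ℕ) = 1 := by
    rw [Fin.val_one']; exact Nat.mod_eq_of_lt (by omega)
  have e2 : ((2 : Fin (q+1)) : ℕ) = 2 := by
    rw [Fin.coe_ofNat_eq_mod]; exact Nat.mod_eq_of_lt (by omega)
  have e0 : ((0 : Fin (q+1)) : ℕ) = 0 := rfl
  have h20 : (2 : Fin (q+1)) ≠ 0 := by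
    intro h; apply_fun Fin.val at h; simp only [e0, e2] at h; omega
  have h12 : (1 : Fin (q+1)) ≠ 2 := by
    intro h; apply_fun Fin.val at h; simp only [e1, e2] at h; omega
  have h10 : (1 : Fin (q+1)) ≠ 0 := by
    intro h; apply_fun Fin.val at h; simp only [e0, e1] at h; omega
  set U : Fin (q+1) → I → ℂ := fun i x => u (i, x) with hU
  by_cases h0 : U 0 = 0
  · -- some U c ≠ 0 with c ≠ 0
    obtain ⟨⟨c, x0⟩, hp⟩ := Function.ne_iff.mp hu
    have hc0 : c ≠ 0 := by
      intro h; subst h; exact hp (by simpa using congrFun h0 x0)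
    refine ⟨0, c, U c, (Ne.symm hc0), fun h => hp (by simpa using congrFun h x0), ?_⟩
    intro x y
    refine ⟨fun r => if r.1 = c then x r.2 else if r.1 = 0 then y r.2 else 0, ?_, ?_⟩
    · intro κ
      rw [bApp_tmul]
      have hcw : ∀ i j : Fin (q+1), cwArr q i j 0 = if i = j ∧ i ≠ 0 then 1 else 0 := by
        intro i j; simp [cwArr]
      simp only [hcw]
      rw [Finset.sum_comm]
      rw [Finset.sum_eq_single c]
      · rw [Finset.sum_eq_single c]
        · simp [hc0, hU]
        · intro i _ hic
          have h3 : (if i = c ∧ i ≠ 0 then (1:ℂ) else 0) = 0 := by simp [hic]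
          simp [h3]
        · simp
      · intro j _ hjc
        apply Finset.sum_eq_zero
        intro i _
        by_cases hij : i = j ∧ i ≠ 0
        · obtain ⟨rfl, hi0⟩ := hij
          have harg : (fun y' => if i = c then x y' else if i = 0 then y y' else 0)
              = (fun _ => (0:ℂ)) := by
            funext y'; simp [hjc, hi0]
          simp [harg, bApp_zero_fun]
        · simp [hij]
      · simp
    · intro κ
      rw [bApp_tmul]
      have hcw : ∀ i j : Fin (q+1), cwArr q i j c =
          (if i = 0 ∧ j = c then 1 else 0) + (if i = c ∧ j = 0 then 1 else 0) := by
        intro i j; simp [cwArr, hc0]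
      simp only [hcw, add_mul, Finset.sum_add_distrib, sum_pair]
      have h0' : (fun x => u ((0 : Fin (q+1)), x)) = (0 : I → ℂ) := h0
      simp [Ne.symm hc0, h0', bApp_zero_left, hU]
  · -- U 0 ≠ 0, use blocks 1 and 2
    refine ⟨1, 2, U 0, h12, h0, ?_⟩
    intro x y
    refine ⟨fun r => if r.1 = 1 then x r.2 else if r.1 = 2 then y r.2 else 0, ?_, ?_⟩
    · intro κ
      rw [bApp_tmul]
      have hcw : ∀ i j : Fin (q+1), cwArr q i j 1 =
          (if i = 0 ∧ j = 1 then 1 else 0) + (if i = 1 ∧ j = 0 then 1 else 0) := by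
        intro i j; simp [cwArr, h10]
      simp only [hcw, add_mul, Finset.sum_add_distrib, sum_pair]
      simp [Ne.symm h10, Ne.symm h20, h12, bApp_zero_fun, hU]
    · intro κ
      rw [bApp_tmul]
      have hcw : ∀ i j : Fin (q+1), cwArr q i j 2 =
          (if i = 0 ∧ j = 2 then 1 else 0) + (if i = 2 ∧ j = 0 then 1 else 0) := by
        intro i j; simp [cwArr, h20]
      simp only [hcw, add_mul, Finset.sum_add_distrib, sum_pair]
      simp [Ne.symm h10, Ne.symm h20, Ne.symm h12, bApp_zero_fun, hU]

end Aux

set_option maxHeartbeats 1000000 in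
theorem stmt11 (q : ℕ) (hq : 2 ≤ q) {I J K : Type*}
    [Fintype I] [Fintype J] [Nonempty I] (ψ : I → J → K → ℂ) :
    2 * mval ψ ≤ mval (tmulBil (cwArr q) ψ) := by
  classical
  set T := tmulBil (cwArr q) ψ with hT
  apply le_csInf
  · -- nonempty
    obtain ⟨i0⟩ := ‹Nonempty I›
    refine ⟨_, ⟨fun p => if p = ((0 : Fin (q+1)), i0) then 1 else 0, ?_, rfl⟩⟩
    intro h
    have := congrFun h ((0 : Fin (q+1)), i0)
    simp at this
  · rintro d ⟨u, hu, rfl⟩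
    obtain ⟨a, b, w, hab, hw, hv⟩ := key_lemma q hq ψ u hu
    set M := Submodule.span ℂ (Set.range (bApp T u)) with hM
    set S := Submodule.span ℂ (Set.range (bApp ψ w)) with hS
    haveI : Module.Finite ℂ M := finite_span_range_bApp T u
    haveI : Module.Finite ℂ S := finite_span_range_bApp ψ w
    -- projection onto blocks a and b
    set π : (Fin (q+1) × K → ℂ) →ₗ[ℂ] (K → ℂ) × (K → ℂ) :=
      LinearMap.prod (LinearMap.funLeft ℂ ℂ (fun κ => (a, κ)))
        (LinearMap.funLeft ℂ ℂ (fun κ => (b, κ))) with hπ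
    set A := S.map (LinearMap.inl ℂ (K → ℂ) (K → ℂ)) with hA
    set B := S.map (LinearMap.inr ℂ (K → ℂ) (K → ℂ)) with hB
    have hAM : A ≤ M.map π := by
      rw [hA, hS, Submodule.map_span, Submodule.span_le]
      rintro _ ⟨_, ⟨x, rfl⟩, rfl⟩
      obtain ⟨v, hva, hvb⟩ := hv x 0
      refine ⟨bApp T u v, Submodule.subset_span ⟨v, rfl⟩, ?_⟩
      have h2 : bApp ψ w (0 : J → ℂ) = 0 := funext fun κ => bApp_zero_right ψ w κ
      ext κ
      · exact hva κ
      · exact (hvb κ).trans (bApp_zero_right ψ w κ)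
    have hBM : B ≤ M.map π := by
      rw [hB, hS, Submodule.map_span, Submodule.span_le]
      rintro _ ⟨_, ⟨y, rfl⟩, rfl⟩
      obtain ⟨v, hva, hvb⟩ := hv 0 y
      refine ⟨bApp T u v, Submodule.subset_span ⟨v, rfl⟩, ?_⟩
      have h2 : bApp ψ w (0 : J → ℂ) = 0 := funext fun κ => bApp_zero_right ψ w κ
      ext κ
      · exact (hva κ).trans (bApp_zero_right ψ w κ)
      · exact hvb κ
    have hdisj : A ⊓ B = ⊥ := by
      rw [eq_bot_iff]
      rintro ⟨z1, z2⟩ ⟨h1, h2⟩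
      obtain ⟨s, _, hs⟩ := h1
      obtain ⟨t, _, ht⟩ := h2
      have hz2 : z2 = 0 := by
        have := congrArg Prod.snd hs; simpa using this.symm
      have hz1 : z1 = 0 := by
        have := congrArg Prod.fst ht; simpa using this.symm
      simp [hz1, hz2]
    have hrA : Module.finrank ℂ A = Module.finrank ℂ S :=
      (Submodule.equivMapOfInjective _ LinearMap.inl_injective S).finrank_eq.symm
    have hrB : Module.finrank ℂ B = Module.finrank ℂ S :=
      (Submodule.equivMapOfInjective _ LinearMap.inr_injective S).finrank_eq.symm
    have hsum : Module.finrank ℂ (A ⊔ B : Submodule ℂ _) = 2 * Module.finrank ℂ S := by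
      have := Submodule.finrank_sup_add_finrank_inf_eq A B
      rw [hdisj] at this
      simp only [finrank_bot, add_zero] at this
      omega
    haveI : Module.Finite ℂ (M.map π) := Module.Finite.map M π
    have h1 : Module.finrank ℂ (A ⊔ B : Submodule ℂ _) ≤ Module.finrank ℂ (M.map π) :=
      Submodule.finrank_mono (sup_le hAM hBM)
    have h2 : Module.finrank ℂ (M.map π) ≤ Module.finrank ℂ M :=
      Submodule.finrank_map_le π M
    have h3 : mval ψ ≤ Module.finrank ℂ S := Nat.sInf_le ⟨w, hw, rfl⟩
    omega
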